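/- In local coordinates, the operator Φ₁(φ,ψ)(X,Y,Z) := (L_{φ(X)}ψ − L_X(ψ∘₁φ))(Y,Z) − (L_{φ(Z)}ψ − L_Z(ψ∘₁φ))(Y,X) + (ψ∘₂φ − ψ∘₁φ)(Y,[X,Z]) has components Φ₁_{ijk} = φ^m_i ∂_m ψ_{jk} + φ^m_j(∂_k ψ_{mi} − ∂_i ψ_{mk}) − φ^m_k ∂_m ψ_{ji} + ψ_{mi}(∂_k φ^m_j − ∂_j φ^m_k) + ψ_{jm}(∂_k φ^m_i − ∂_i φ^m_k) + ψ_{mk}(∂_j φ^m_i − ∂_i φ^m_j), so that Φ₁(φ,ψ)(X,Y,Z) = Φ₁_{ijk} X^i Y^j Z^k. -/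

import Mathlib

open scoped BigOperators

noncomputable section

/-- Points of the model space `ℝ^m`. -/
abbrev Pt (m : ℕ) := Fin m → ℝ
/-- Vector fields (or 1-forms) on `ℝ^m`, given by their components. -/
abbrev VF (m : ℕ) := Pt m → Fin m → ℝ
/-- (0,2)-tensor fields (or (1,1)-tensor fields) on `ℝ^m`, given by components. -/
abbrev T02 (m : ℕ) := Pt m → Fin m → Fin m → ℝ
/-- (0,3)- or (1,2)-tensor fields on `ℝ^m`, given by components. -/
abbrev T3 (m : ℕ) := Pt m → Fin m → Fin m → Fin m → ℝ

variable {m : ℕ}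

/-- `i`-th partial derivative of a scalar function. -/
def pd (i : Fin m) (f : Pt m → ℝ) (x : Pt m) : ℝ :=
  fderiv ℝ f x (Pi.single i 1)

/-- Derivative of a function `f` along a vector field `X`. -/
def Xdot (X : VF m) (f : Pt m → ℝ) (x : Pt m) : ℝ :=
  ∑ k, X x k * pd k f x

/-- Lie bracket of vector fields, in components. -/
def lieB (X Y : VF m) : VF m := fun x i =>
  ∑ k, (X x k * pd k (fun y => Y y i) x - Y x k * pd k (fun y => X y i) x)

/-- Evaluation `ψ(X)` of a 1-form on a vector field. -/
def ev1 (ψ X : VF m) (x : Pt m) : ℝ := ∑ i, ψ x i * X x i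

/-- Exterior derivative of a function, as a 1-form. -/
def dF (f : Pt m → ℝ) : VF m := fun x i => pd i f x

/-- Exterior derivative of a 1-form, as a 2-form: `(dψ)_{ij} = ∂_i ψ_j - ∂_j ψ_i`. -/
def d2 (ψ : VF m) : T02 m := fun x i j =>
  pd i (fun y => ψ y j) x - pd j (fun y => ψ y i) x

/-- Evaluation of a (0,2)-tensor field on two vector fields. -/
def ev2 (T : T02 m) (X Y : VF m) (x : Pt m) : ℝ :=
  ∑ i, ∑ j, T x i j * X x i * Y x j

/-- Lie derivative of a 1-form `ψ` along `X`, evaluated on `Y`: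
`(L_X ψ)(Y) = X·(ψ(Y)) - ψ([X,Y])`. -/
def lie1 (X ψ Y : VF m) (x : Pt m) : ℝ :=
  Xdot X (ev1 ψ Y) x - ev1 ψ (lieB X Y) x

/-- Lie derivative of a (0,2)-tensor field `T` along `X`, evaluated on `Y, Z`:
`(L_X T)(Y,Z) = X·T(Y,Z) - T([X,Y],Z) - T(Y,[X,Z])`. -/
def lie2 (X : VF m) (T : T02 m) (Y Z : VF m) (x : Pt m) : ℝ :=
  Xdot X (ev2 T Y Z) x - ev2 T (lieB X Y) Z x - ev2 T Y (lieB X Z) x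

/-- Application of a (1,1)-tensor field to a vector field: `(φX)^i = φ^i_j X^j`. -/
def appT (φ : T02 m) (X : VF m) : VF m := fun x i => ∑ j, φ x i j * X x j

/-- `(ψ∘₁φ)(X,Y) = ψ(φX,Y)`, in components `(ψ∘₁φ)_{ij} = ψ_{aj} φ^a_i`. -/
def comp1 (ψ φ : T02 m) : T02 m := fun x i j => ∑ a, ψ x a j * φ x a i

/-- `(ψ∘₂φ)(X,Y) = ψ(X,φY)`, in components `(ψ∘₂φ)_{ij} = ψ_{ia} φ^a_j`. -/
def comp2 (ψ φ : T02 m) : T02 m := fun x i j => ∑ a, ψ x i a * φ x a j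

/-- Composition `ψ∘φ` of a 1-form with a (1,1)-tensor field:  `(ψ∘φ)_i = ψ_a φ^a_i`. -/
def compF (ψ : VF m) (φ : T02 m) : VF m := fun x i => ∑ a, ψ x a * φ x a i

/-- Exterior derivative of a 2-form `T`, as a 3-form:
`(dT)_{ijk} = ∂_i T_{jk} - ∂_j T_{ik} + ∂_k T_{ij}`. -/
def d3 (T : T02 m) : T3 m := fun x i j k =>
  pd i (fun y => T y j k) x - pd j (fun y => T y i k) x + pd k (fun y => T y i j) x

/-- Evaluation of a (0,3)-tensor field on three vector fields. -/
def ev3 (U : T3 m) (X Y Z : VF m) (x : Pt m) : ℝ :=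
  ∑ i, ∑ j, ∑ k, U x i j k * X x i * Y x j * Z x k

/-- Pointwise sum of vector fields. -/
def addV (X Y : VF m) : VF m := fun x i => X x i + Y x i

/-- Pointwise multiplication of a vector field by a function. -/
def smulV (f : Pt m → ℝ) (X : VF m) : VF m := fun x i => f x * X x i


/-- The first operator of Theorem 3.4:
`Φ₁(φ,ψ)(X,Y,Z) = (L_{φ(X)}ψ − L_X(ψ∘₁φ))(Y,Z) − (L_{φ(Z)}ψ − L_Z(ψ∘₁φ))(Y,X)
  + (ψ∘₂φ)(Y,[X,Z]) − (ψ∘₁φ)(Y,[X,Z])`. -/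
def Phi1 (φ ψ : T02 m) (X Y Z : VF m) (x : Pt m) : ℝ :=
  (lie2 (appT φ X) ψ Y Z x - lie2 X (comp1 ψ φ) Y Z x)
  - (lie2 (appT φ Z) ψ Y X x - lie2 Z (comp1 ψ φ) Y X x)
  + ev2 (comp2 ψ φ) Y (lieB X Z) x - ev2 (comp1 ψ φ) Y (lieB X Z) x

/-- The coordinate components of `Φ₁`:
`Φ₁_{ijk} = φ^m_i ∂_m ψ_{jk} + φ^m_j(∂_k ψ_{mi} − ∂_i ψ_{mk}) − φ^m_k ∂_m ψ_{ji}
 + ψ_{mi}(∂_k φ^m_j − ∂_j φ^m_k) + ψ_{jm}(∂_k φ^m_i − ∂_i φ^m_k)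
 + ψ_{mk}(∂_j φ^m_i − ∂_i φ^m_j)`. -/
def Phi1C (φ ψ : T02 m) (x : Pt m) (i j k : Fin m) : ℝ :=
  ∑ n, (φ x n i * pd n (fun y => ψ y j k) x
      + φ x n j * (pd k (fun y => ψ y n i) x - pd i (fun y => ψ y n k) x)
      - φ x n k * pd n (fun y => ψ y j i) x
      + ψ x n i * (pd k (fun y => φ y n j) x - pd j (fun y => φ y n k) x)
      + ψ x j n * (pd k (fun y => φ y n i) x - pd i (fun y => φ y n k) x)
      + ψ x n k * (pd j (fun y => φ y n i) x - pd i (fun y => φ y n j) x))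

lemma pd_mul (i : Fin m) (f g : Pt m → ℝ) (x : Pt m)
    (hf : DifferentiableAt ℝ f x) (hg : DifferentiableAt ℝ g x) :
    pd i (fun y => f y * g y) x = pd i f x * g x + f x * pd i g x := by
  simp [pd, fderiv_fun_mul hf hg]; ring

lemma pd_sum {ι : Type*} (s : Finset ι) (i : Fin m) (f : ι → Pt m → ℝ) (x : Pt m)
    (hf : ∀ a ∈ s, DifferentiableAt ℝ (f a) x) :
    pd i (fun y => ∑ a ∈ s, f a y) x = ∑ a ∈ s, pd i (f a) x := by
  simp [pd, fderiv_fun_sum hf]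

lemma pd_mul3 (i : Fin m) (f g h : Pt m → ℝ) (x : Pt m)
    (hf : DifferentiableAt ℝ f x) (hg : DifferentiableAt ℝ g x)
    (hh : DifferentiableAt ℝ h x) :
    pd i (fun y => f y * g y * h y) x
      = pd i f x * g x * h x + f x * pd i g x * h x + f x * g x * pd i h x := by
  rw [pd_mul i (fun y => f y * g y) h x (hf.mul hg) hh, pd_mul i f g x hf hg]; ring

lemma diff2 {T : T02 m} (hT : ContDiff ℝ (⊤ : ℕ∞) T) (j k : Fin m) :
    Differentiable ℝ (fun y => T y j k) :=
  ((contDiff_pi.mp ((contDiff_pi.mp hT) j)) k).differentiable (by simp)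

lemma diff1 {X : VF m} (hX : ContDiff ℝ (⊤ : ℕ∞) X) (i : Fin m) :
    Differentiable ℝ (fun y => X y i) :=
  ((contDiff_pi.mp hX) i).differentiable (by simp)

lemma lie2_eq (U : VF m) (T : T02 m) (Y Z : VF m) (x : Pt m)
    (hU : ∀ i, Differentiable ℝ (fun y => U y i))
    (hT : ∀ j k, Differentiable ℝ (fun y => T y j k))
    (hY : ∀ i, Differentiable ℝ (fun y => Y y i))
    (hZ : ∀ i, Differentiable ℝ (fun y => Z y i)) :
    lie2 U T Y Z x = ∑ p, ∑ j, ∑ k,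
      ( U x p * pd p (fun y => T y j k) x * Y x j * Z x k
      + T x j k * Y x p * pd p (fun y => U y j) x * Z x k
      + T x j k * Y x j * Z x p * pd p (fun y => U y k) x ) := by
  have hpd : ∀ p : Fin m, pd p (fun y => ∑ j, ∑ k, T y j k * Y y j * Z y k) x
      = ∑ j, ∑ k, (pd p (fun y => T y j k) x * Y x j * Z x k
        + T x j k * pd p (fun y => Y y j) x * Z x k
        + T x j k * Y x j * pd p (fun y => Z y k) x) := by
    intro p
    rw [pd_sum Finset.univ p (fun j y => ∑ k, T y j k * Y y j * Z y k) x
      (fun a _ => (Differentiable.fun_sum (fun k _ =>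
        (((hT a k).mul (hY a)).mul (hZ k)))).differentiableAt)]
    refine Finset.sum_congr rfl fun j _ => ?_
    rw [pd_sum Finset.univ p (fun k y => T y j k * Y y j * Z y k) x
      (fun a _ => ((((hT j a).mul (hY j)).mul (hZ a))).differentiableAt)]
    exact Finset.sum_congr rfl fun k _ => pd_mul3 p _ _ _ x
      ((hT j k).differentiableAt) ((hY j).differentiableAt) ((hZ k).differentiableAt)
  simp only [lie2, Xdot, lieB]
  rw [show ev2 T Y Z = fun y => ∑ j, ∑ k, T y j k * Y y j * Z y k from rfl]
  simp only [hpd, ev2, lieB]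
  have key : ∀ (F : Fin m → Fin m → Fin m → ℝ),
      (∑ j, ∑ k, ∑ p, F p j k) = ∑ p, ∑ j, ∑ k, F p j k := fun F =>
    (Finset.sum_congr rfl fun _ _ => Finset.sum_comm).trans Finset.sum_comm
  have e1 : (∑ p, U x p * ∑ j, ∑ k,
        (pd p (fun y => T y j k) x * Y x j * Z x k
        + T x j k * pd p (fun y => Y y j) x * Z x k
        + T x j k * Y x j * pd p (fun y => Z y k) x))
      = ∑ p, ∑ j, ∑ k, (U x p *
        (pd p (fun y => T y j k) x * Y x j * Z x k
        + T x j k * pd p (fun y => Y y j) x * Z x k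
        + T x j k * Y x j * pd p (fun y => Z y k) x)) := by
    refine Finset.sum_congr rfl fun p _ => ?_
    rw [Finset.mul_sum]
    exact Finset.sum_congr rfl fun j _ => Finset.mul_sum ..
  have e2 : (∑ j, ∑ k, T x j k *
        (∑ p, (U x p * pd p (fun y => Y y j) x - Y x p * pd p (fun y => U y j) x)) * Z x k)
      = ∑ p, ∑ j, ∑ k, (T x j k *
        (U x p * pd p (fun y => Y y j) x - Y x p * pd p (fun y => U y j) x) * Z x k) := by
    rw [← key]
    refine Finset.sum_congr rfl fun j _ => Finset.sum_congr rfl fun k _ => ?_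
    rw [Finset.mul_sum, Finset.sum_mul]
  have e3 : (∑ j, ∑ k, T x j k * Y x j *
        (∑ p, (U x p * pd p (fun y => Z y k) x - Z x p * pd p (fun y => U y k) x)))
      = ∑ p, ∑ j, ∑ k, (T x j k * Y x j *
        (U x p * pd p (fun y => Z y k) x - Z x p * pd p (fun y => U y k) x)) := by
    rw [← key]
    refine Finset.sum_congr rfl fun j _ => Finset.sum_congr rfl fun k _ => ?_
    rw [Finset.mul_sum]
  rw [e1, e2, e3]
  simp only [← Finset.sum_sub_distrib]
  exact Finset.sum_congr rfl fun p _ => Finset.sum_congr rfl fun j _ =>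
    Finset.sum_congr rfl fun k _ => by ring

lemma pd_appT (φ : T02 m) (X : VF m) (hφ : ∀ j k, Differentiable ℝ fun y => φ y j k)
    (hX : ∀ i, Differentiable ℝ fun y => X y i) (p j : Fin m) (x : Pt m) :
    pd p (fun y => appT φ X y j) x
      = ∑ i, (pd p (fun y => φ y j i) x * X x i + φ x j i * pd p (fun y => X y i) x) := by
  rw [show (fun y => appT φ X y j) = fun y => ∑ i, φ y j i * X y i from rfl,
    pd_sum Finset.univ p (fun i y => φ y j i * X y i) x
      (fun i _ => ((hφ j i).mul (hX i)).differentiableAt)]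
  exact Finset.sum_congr rfl fun i _ => pd_mul p _ _ x
    ((hφ j i).differentiableAt) ((hX i).differentiableAt)

lemma pd_comp1 (ψ φ : T02 m) (hψ : ∀ j k, Differentiable ℝ fun y => ψ y j k)
    (hφ : ∀ j k, Differentiable ℝ fun y => φ y j k) (p j k : Fin m) (x : Pt m) :
    pd p (fun y => comp1 ψ φ y j k) x
      = ∑ n, (pd p (fun y => ψ y n k) x * φ x n j + ψ x n k * pd p (fun y => φ y n j) x) := by
  rw [show (fun y => comp1 ψ φ y j k) = fun y => ∑ n, ψ y n k * φ y n j from rfl,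
    pd_sum Finset.univ p (fun n y => ψ y n k * φ y n j) x
      (fun n _ => ((hψ n k).mul (hφ n j)).differentiableAt)]
  exact Finset.sum_congr rfl fun n _ => pd_mul p _ _ x
    ((hψ n k).differentiableAt) ((hφ n j).differentiableAt)

lemma sum4_prod (F : Fin m → Fin m → Fin m → Fin m → ℝ) :
    (∑ p, ∑ q, ∑ r, ∑ s, F p q r s)
      = ∑ t : Fin m × Fin m × Fin m × Fin m, F t.1 t.2.1 t.2.2.1 t.2.2.2 := by
  rw [Fintype.sum_prod_type]
  refine Finset.sum_congr rfl fun p _ => ?_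
  rw [Fintype.sum_prod_type]
  exact Finset.sum_congr rfl fun q _ => by rw [Fintype.sum_prod_type]

lemma sum4_reindex (F G : Fin m → Fin m → Fin m → Fin m → ℝ)
    (σ1 σ2 σ3 σ4 : Fin m → Fin m → Fin m → Fin m → Fin m)
    (τ : Fin m × Fin m × Fin m × Fin m → Fin m × Fin m × Fin m × Fin m)
    (hστ : ∀ p q r s, τ (σ1 p q r s, σ2 p q r s, σ3 p q r s, σ4 p q r s) = (p, q, r, s))
    (hτσ : ∀ t : Fin m × Fin m × Fin m × Fin m,
      (σ1 (τ t).1 (τ t).2.1 (τ t).2.2.1 (τ t).2.2.2,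
       σ2 (τ t).1 (τ t).2.1 (τ t).2.2.1 (τ t).2.2.2,
       σ3 (τ t).1 (τ t).2.1 (τ t).2.2.1 (τ t).2.2.2,
       σ4 (τ t).1 (τ t).2.1 (τ t).2.2.1 (τ t).2.2.2) = t)
    (h : ∀ p q r s, G p q r s
        = F (σ1 p q r s) (σ2 p q r s) (σ3 p q r s) (σ4 p q r s)) :
    (∑ p, ∑ q, ∑ r, ∑ s, F p q r s) = ∑ p, ∑ q, ∑ r, ∑ s, G p q r s := by
  let e : (Fin m × Fin m × Fin m × Fin m) ≃ (Fin m × Fin m × Fin m × Fin m) :=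
    ⟨fun t => (σ1 t.1 t.2.1 t.2.2.1 t.2.2.2, σ2 t.1 t.2.1 t.2.2.1 t.2.2.2,
       σ3 t.1 t.2.1 t.2.2.1 t.2.2.2, σ4 t.1 t.2.1 t.2.2.1 t.2.2.2),
     τ, fun t => by obtain ⟨p, q, r, s⟩ := t; exact hστ p q r s, hτσ⟩
  rw [sum4_prod F, sum4_prod G]
  refine ((Finset.sum_congr rfl fun t _ => ?_).trans
    (Equiv.sum_comp e (fun t => F t.1 t.2.1 t.2.2.1 t.2.2.2))).symm
  obtain ⟨p, q, r, s⟩ := t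
  exact h p q r s

lemma main_alg (m : ℕ) (a b c : Fin m → ℝ) (da dc : Fin m → Fin m → ℝ)
    (f g : Fin m → Fin m → ℝ) (df dg : Fin m → Fin m → Fin m → ℝ) :
    (∑ p, ∑ j, ∑ k,
       ((∑ i, f p i * a i) * dg p j k * b j * c k
        + (g j k * b p * ∑ i, (df p j i * a i + f j i * da p i)) * c k
        + g j k * b j * c p * ∑ i, (df p k i * a i + f k i * da p i))
     - ∑ p, ∑ j, ∑ k,
       ((a p * ∑ n, (dg p n k * f n j + g n k * df p n j)) * b j * c k
        + (∑ n, g n k * f n j) * b p * da p j * c k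
        + (∑ n, g n k * f n j) * b j * c p * da p k)
     - (∑ p, ∑ j, ∑ k,
       ((∑ i, f p i * c i) * dg p j k * b j * a k
        + (g j k * b p * ∑ i, (df p j i * c i + f j i * dc p i)) * a k
        + g j k * b j * a p * ∑ i, (df p k i * c i + f k i * dc p i))
     - ∑ p, ∑ j, ∑ k,
       ((c p * ∑ n, (dg p n k * f n j + g n k * df p n j)) * b j * a k
        + (∑ n, g n k * f n j) * b p * dc p j * a k
        + (∑ n, g n k * f n j) * b j * a p * dc p k))
     + ∑ j, ∑ k, (∑ n, g j n * f n k) * b j * (∑ p, (a p * dc p k - c p * da p k))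
     - ∑ j, ∑ k, (∑ n, g n k * f n j) * b j * (∑ p, (a p * dc p k - c p * da p k)))
    = ∑ i, ∑ j, ∑ k, (∑ n,
        (f n i * dg n j k + f n j * (dg k n i - dg i n k) - f n k * dg n j i
         + g n i * (df k n j - df j n k) + g j n * (df k n i - df i n k)
         + g n k * (df j n i - df i n j))) * a i * b j * c k := by
  simp only [Finset.mul_sum, Finset.sum_mul, mul_add, add_mul, mul_sub, sub_mul,
    Finset.sum_add_distrib, Finset.sum_sub_distrib]
  have m1 : (∑ p, ∑ q, ∑ r, ∑ s, f p s * a s * dg p q r * b q * c r)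
      = ∑ p, ∑ q, ∑ r, ∑ s, f s p * dg s q r * a p * b q * c r :=
    sum4_reindex _ _ (fun p q r s => s) (fun p q r s => q) (fun p q r s => r) (fun p q r s => p)
      (fun t => (t.2.2.2, t.2.1, t.2.2.1, t.1)) (fun _ _ _ _ => rfl) (fun _ => rfl)
      (fun p q r s => by ring)
  have m2 : (∑ p, ∑ q, ∑ r, ∑ s, g q r * b p * (df p q s * a s) * c r)
      = ∑ p, ∑ q, ∑ r, ∑ s, g s r * df q s p * a p * b q * c r :=
    sum4_reindex _ _ (fun p q r s => q) (fun p q r s => s) (fun p q r s => r) (fun p q r s => p)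
      (fun t => (t.2.2.2, t.1, t.2.2.1, t.2.1)) (fun _ _ _ _ => rfl) (fun _ => rfl)
      (fun p q r s => by ring)
  have m4 : (∑ p, ∑ q, ∑ r, ∑ s, g q r * b q * c p * (df p r s * a s))
      = ∑ p, ∑ q, ∑ r, ∑ s, g q s * df r s p * a p * b q * c r :=
    sum4_reindex _ _ (fun p q r s => r) (fun p q r s => q) (fun p q r s => s) (fun p q r s => p)
      (fun t => (t.2.2.2, t.2.1, t.1, t.2.2.1)) (fun _ _ _ _ => rfl) (fun _ => rfl)
      (fun p q r s => by ring)
  have m6 : (∑ p, ∑ q, ∑ r, ∑ s, a p * (dg p s r * f s q) * b q * c r)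
      = ∑ p, ∑ q, ∑ r, ∑ s, f s q * dg p s r * a p * b q * c r :=
    sum4_reindex _ _ (fun p q r s => p) (fun p q r s => q) (fun p q r s => r) (fun p q r s => s) id (fun _ _ _ _ => rfl) (fun _ => rfl) (fun p q r s => by ring)
  have m7 : (∑ p, ∑ q, ∑ r, ∑ s, a p * (g s r * df p s q) * b q * c r)
      = ∑ p, ∑ q, ∑ r, ∑ s, g s r * df p s q * a p * b q * c r :=
    sum4_reindex _ _ (fun p q r s => p) (fun p q r s => q) (fun p q r s => r) (fun p q r s => s) id (fun _ _ _ _ => rfl) (fun _ => rfl) (fun p q r s => by ring)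
  have m10 : (∑ p, ∑ q, ∑ r, ∑ s, f p s * c s * dg p q r * b q * a r)
      = ∑ p, ∑ q, ∑ r, ∑ s, f s r * dg s q p * a p * b q * c r :=
    sum4_reindex _ _ (fun p q r s => s) (fun p q r s => q) (fun p q r s => p) (fun p q r s => r)
      (fun t => (t.2.2.1, t.2.1, t.2.2.2, t.1)) (fun _ _ _ _ => rfl) (fun _ => rfl)
      (fun p q r s => by ring)
  have m11 : (∑ p, ∑ q, ∑ r, ∑ s, g q r * b p * (df p q s * c s) * a r)
      = ∑ p, ∑ q, ∑ r, ∑ s, g s p * df q s r * a p * b q * c r :=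
    sum4_reindex _ _ (fun p q r s => q) (fun p q r s => s) (fun p q r s => p) (fun p q r s => r)
      (fun t => (t.2.2.1, t.1, t.2.2.2, t.2.1)) (fun _ _ _ _ => rfl) (fun _ => rfl)
      (fun p q r s => by ring)
  have m13 : (∑ p, ∑ q, ∑ r, ∑ s, g q r * b q * a p * (df p r s * c s))
      = ∑ p, ∑ q, ∑ r, ∑ s, g q s * df p s r * a p * b q * c r :=
    sum4_reindex _ _ (fun p q r s => p) (fun p q r s => q) (fun p q r s => s) (fun p q r s => r)
      (fun t => (t.1, t.2.1, t.2.2.2, t.2.2.1)) (fun _ _ _ _ => rfl) (fun _ => rfl)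
      (fun p q r s => by ring)
  have m15 : (∑ p, ∑ q, ∑ r, ∑ s, c p * (dg p s r * f s q) * b q * a r)
      = ∑ p, ∑ q, ∑ r, ∑ s, f s q * dg r s p * a p * b q * c r :=
    sum4_reindex _ _ (fun p q r s => r) (fun p q r s => q) (fun p q r s => p) (fun p q r s => s)
      (fun t => (t.2.2.1, t.2.1, t.1, t.2.2.2)) (fun _ _ _ _ => rfl) (fun _ => rfl)
      (fun p q r s => by ring)
  have m16 : (∑ p, ∑ q, ∑ r, ∑ s, c p * (g s r * df p s q) * b q * a r)
      = ∑ p, ∑ q, ∑ r, ∑ s, g s p * df r s q * a p * b q * c r :=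
    sum4_reindex _ _ (fun p q r s => r) (fun p q r s => q) (fun p q r s => p) (fun p q r s => s)
      (fun t => (t.2.2.1, t.2.1, t.1, t.2.2.2)) (fun _ _ _ _ => rfl) (fun _ => rfl)
      (fun p q r s => by ring)
  have c1 : (∑ p, ∑ q, ∑ r, ∑ s, g q r * b p * (f q s * da p s) * c r)
      = ∑ p, ∑ q, ∑ r, ∑ s, g s r * f s q * b p * da p q * c r :=
    sum4_reindex _ _ (fun p q r s => p) (fun p q r s => s) (fun p q r s => r) (fun p q r s => q)
      (fun t => (t.1, t.2.2.2, t.2.2.1, t.2.1)) (fun _ _ _ _ => rfl) (fun _ => rfl)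
      (fun p q r s => by ring)
  have c2 : (∑ p, ∑ q, ∑ r, ∑ s, g q r * b q * c p * (f r s * da p s))
      = ∑ p, ∑ q, ∑ r, ∑ s, g p s * f s q * b p * (c r * da r q) :=
    sum4_reindex _ _ (fun p q r s => r) (fun p q r s => p) (fun p q r s => s) (fun p q r s => q)
      (fun t => (t.2.1, t.2.2.2, t.1, t.2.2.1)) (fun _ _ _ _ => rfl) (fun _ => rfl)
      (fun p q r s => by ring)
  have c3 : (∑ p, ∑ q, ∑ r, ∑ s, g s r * f s q * b q * c p * da p r)
      = ∑ p, ∑ q, ∑ r, ∑ s, g s q * f s p * b p * (c r * da r q) :=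
    sum4_reindex _ _ (fun p q r s => r) (fun p q r s => p) (fun p q r s => q) (fun p q r s => s)
      (fun t => (t.2.1, t.2.2.1, t.1, t.2.2.2)) (fun _ _ _ _ => rfl) (fun _ => rfl)
      (fun p q r s => by ring)
  have c4 : (∑ p, ∑ q, ∑ r, ∑ s, g q r * b p * (f q s * dc p s) * a r)
      = ∑ p, ∑ q, ∑ r, ∑ s, g s r * f s q * b p * dc p q * a r :=
    sum4_reindex _ _ (fun p q r s => p) (fun p q r s => s) (fun p q r s => r) (fun p q r s => q)
      (fun t => (t.1, t.2.2.2, t.2.2.1, t.2.1)) (fun _ _ _ _ => rfl) (fun _ => rfl)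
      (fun p q r s => by ring)
  have c5 : (∑ p, ∑ q, ∑ r, ∑ s, g q r * b q * a p * (f r s * dc p s))
      = ∑ p, ∑ q, ∑ r, ∑ s, g p s * f s q * b p * (a r * dc r q) :=
    sum4_reindex _ _ (fun p q r s => r) (fun p q r s => p) (fun p q r s => s) (fun p q r s => q)
      (fun t => (t.2.1, t.2.2.2, t.1, t.2.2.1)) (fun _ _ _ _ => rfl) (fun _ => rfl)
      (fun p q r s => by ring)
  have c6 : (∑ p, ∑ q, ∑ r, ∑ s, g s r * f s q * b q * a p * dc p r)
      = ∑ p, ∑ q, ∑ r, ∑ s, g s q * f s p * b p * (a r * dc r q) :=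
    sum4_reindex _ _ (fun p q r s => r) (fun p q r s => p) (fun p q r s => q) (fun p q r s => s)
      (fun t => (t.2.1, t.2.2.1, t.1, t.2.2.2)) (fun _ _ _ _ => rfl) (fun _ => rfl)
      (fun p q r s => by ring)
  linear_combination m1 + m2 + m4 - m6 - m7 - m10 - m11 - m13 + m15 + m16
    + c1 + c2 - c3 - c4 - c5 + c6


/-- Theorem 3.4: in local coordinates,
`Φ₁(φ,ψ)(X,Y,Z) = Φ₁_{ijk} X^i Y^j Z^k`. -/
theorem stmt14 (m : ℕ) (φ ψ : T02 m)
    (hφ : ContDiff ℝ (⊤ : ℕ∞) φ) (hψ : ContDiff ℝ (⊤ : ℕ∞) ψ)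
    (X Y Z : VF m) (hX : ContDiff ℝ (⊤ : ℕ∞) X) (hY : ContDiff ℝ (⊤ : ℕ∞) Y)
    (hZ : ContDiff ℝ (⊤ : ℕ∞) Z) :
    ∀ x : Pt m,
      Phi1 φ ψ X Y Z x
        = ∑ i, ∑ j, ∑ k, Phi1C φ ψ x i j k * X x i * Y x j * Z x k := by

  intro x
  have hdφ : ∀ j k, Differentiable ℝ fun y => φ y j k := diff2 hφ
  have hdψ : ∀ j k, Differentiable ℝ fun y => ψ y j k := diff2 hψ
  have hdX : ∀ i, Differentiable ℝ fun y => X y i := diff1 hX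
  have hdY : ∀ i, Differentiable ℝ fun y => Y y i := diff1 hY
  have hdZ : ∀ i, Differentiable ℝ fun y => Z y i := diff1 hZ
  have hdφX : ∀ i, Differentiable ℝ (fun y => appT φ X y i) := fun i =>
    Differentiable.fun_sum fun j _ => (hdφ i j).mul (hdX j)
  have hdφZ : ∀ i, Differentiable ℝ (fun y => appT φ Z y i) := fun i =>
    Differentiable.fun_sum fun j _ => (hdφ i j).mul (hdZ j)
  have hdc1 : ∀ j k, Differentiable ℝ (fun y => comp1 ψ φ y j k) := fun j k =>
    Differentiable.fun_sum fun a _ => (hdψ a k).mul (hdφ a j)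
  rw [Phi1,
    lie2_eq (appT φ X) ψ Y Z x hdφX hdψ hdY hdZ,
    lie2_eq X (comp1 ψ φ) Y Z x hdX hdc1 hdY hdZ,
    lie2_eq (appT φ Z) ψ Y X x hdφZ hdψ hdY hdX,
    lie2_eq Z (comp1 ψ φ) Y X x hdZ hdc1 hdY hdX]
  simp only [pd_appT φ X hdφ hdX, pd_appT φ Z hdφ hdZ, pd_comp1 ψ φ hdψ hdφ]
  simp only [ev2, comp1, comp2, lieB, appT, Phi1C]
  exact main_alg m (fun i => X x i) (fun i => Y x i) (fun i => Z x i)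
    (fun p i => pd p (fun y => X y i) x) (fun p i => pd p (fun y => Z y i) x)
    (fun n i => φ x n i) (fun j k => ψ x j k)
    (fun p n i => pd p (fun y => φ y n i) x)
    (fun p j k => pd p (fun y => ψ y j k) x)
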